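/- Equality case of the Newton–Maclaurin inequality: let n ≥ 2 and 1 ≤ l < k ≤ n, and let λ ∈ ℝⁿ lie in the Gårding cone Γ_k⁺ (i.e. H_i(λ) > 0 for i = 1,…,k). Then H_{l−1}(λ)·H_k(λ) = H_l(λ)·H_{k−1}(λ) if and only if there exists a constant c > 0 with λ_i = c for all i = 1,…,n. -/

import Mathlib

open Polynomial Finset


/-- The `k`-th elementary symmetric polynomial `S_k(λ)` of `λ ∈ ℝⁿ`. -/
noncomputable def S (n k : ℕ) (lam : Fin n → ℝ) : ℝ :=
  ∑ A ∈ (Finset.univ : Finset (Fin n)).powersetCard k, ∏ i ∈ A, lam i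

/-- The normalized `k`-th elementary symmetric function `H_k(λ) = S_k(λ) / C(n,k)`. -/
noncomputable def H (n k : ℕ) (lam : Fin n → ℝ) : ℝ := S n k lam / (n.choose k)

lemma S_zero (n : ℕ) (lam : Fin n → ℝ) : S n 0 lam = 1 := by
  simp [S, Finset.powersetCard_zero]

lemma H_zero (n : ℕ) (lam : Fin n → ℝ) : H n 0 lam = 1 := by
  simp [H, S_zero]

lemma S_one (n : ℕ) (lam : Fin n → ℝ) : S n 1 lam = ∑ i, lam i := by
  simp [S, Finset.powersetCard_one]

lemma S_top (n : ℕ) (lam : Fin n → ℝ) : S n n lam = ∏ i, lam i := by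
  have h := Finset.powersetCard_self (Finset.univ : Finset (Fin n))
  rw [Finset.card_univ, Fintype.card_fin] at h
  rw [S, h, Finset.sum_singleton]

lemma S_const (n k : ℕ) (c : ℝ) : S n k (fun _ => c) = (n.choose k) * c ^ k := by
  unfold S
  rw [Finset.sum_congr rfl fun A hA => show ∏ _i ∈ A, c = c ^ k by
      rw [Finset.prod_const, (Finset.mem_powersetCard.1 hA).2]]
  rw [Finset.sum_const, Finset.card_powersetCard, Finset.card_univ, Fintype.card_fin,
    nsmul_eq_mul]

lemma H_const (n k : ℕ) (c : ℝ) (hk : k ≤ n) : H n k (fun _ => c) = c ^ k := by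
  have h0 : (0:ℝ) < (n.choose k : ℝ) := by exact_mod_cast Nat.choose_pos hk
  rw [H, S_const]
  field_simp

lemma esymm2 {ι : Type*} [DecidableEq ι] (s : Finset ι) (f : ι → ℝ) :
    2 * ∑ A ∈ s.powersetCard 2, ∏ i ∈ A, f i
      = (∑ i ∈ s, f i) ^ 2 - ∑ i ∈ s, (f i) ^ 2 := by
  induction s using Finset.induction with
  | empty =>
    have : (∅ : Finset ι).powersetCard 2 = ∅ := by
      ext A
      simp only [Finset.mem_powersetCard, Finset.subset_empty, Finset.notMem_empty, iff_false]
      rintro ⟨rfl, h⟩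
      simp at h
    simp [this]
  | @insert a s ha ih =>
    have hd : Disjoint (s.powersetCard 2) ((s.powersetCard 1).image (insert a)) := by
      rw [Finset.disjoint_right]
      rintro A hA hA2
      obtain ⟨B, hB, rfl⟩ := Finset.mem_image.1 hA
      exact ha ((Finset.mem_powersetCard.1 hA2).1 (Finset.mem_insert_self a B))
    have hi : ∀ x ∈ s.powersetCard 1, ∀ y ∈ s.powersetCard 1, insert a x = insert a y → x = y := by
      intro x hx y hy hxy
      have hax : a ∉ x := fun h => ha ((Finset.mem_powersetCard.1 hx).1 h)
      have hay : a ∉ y := fun h => ha ((Finset.mem_powersetCard.1 hy).1 h)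
      rw [← Finset.erase_insert hax, ← Finset.erase_insert hay, hxy]
    have h2 : ∑ B ∈ s.powersetCard 1, ∏ i ∈ insert a B, f i = f a * ∑ i ∈ s, f i := by
      rw [Finset.powersetCard_one, Finset.sum_map, Finset.mul_sum]
      refine Finset.sum_congr rfl fun i hi2 => ?_
      have hai : a ∉ ({i} : Finset ι) := by
        simp only [Finset.mem_singleton]
        rintro rfl; exact ha hi2
      show ∏ j ∈ insert a {i}, f j = f a * f i
      rw [Finset.prod_insert hai, Finset.prod_singleton]
    rw [show (2:ℕ) = 1 + 1 from rfl, Finset.powersetCard_succ_insert ha, Finset.sum_union hd, Finset.sum_image hi, h2,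
      Finset.sum_insert ha, Finset.sum_insert ha]
    linear_combination ih

lemma newton_base_key (n : ℕ) (hn : 2 ≤ n) (lam : Fin n → ℝ) :
    (2 * (n:ℝ)^2 * ((n:ℝ) - 1)) * (H n 1 lam ^ 2 - H n 0 lam * H n 2 lam)
      = ∑ i, ∑ j, (lam i - lam j)^2 := by
  have hn0 : (n:ℝ) ≠ 0 := by positivity
  have hn1 : (n:ℝ) - 1 ≠ 0 := by
    have : (2:ℝ) ≤ n := by exact_mod_cast hn
    nlinarith
  have hc2 : ((n.choose 2 : ℕ) : ℝ) = (n:ℝ) * ((n:ℝ) - 1) / 2 := Nat.cast_choose_two (K := ℝ) n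
  have hS2 : 2 * S n 2 lam = (∑ i, lam i) ^ 2 - ∑ i, (lam i) ^ 2 := esymm2 _ _
  have hV : ∑ i, ∑ j, (lam i - lam j) ^ 2
      = 2 * (n:ℝ) * (∑ i, (lam i) ^ 2) - 2 * (∑ i, lam i) ^ 2 := by
    have hrow : ∀ i, ∑ j, (lam i - lam j) ^ 2
        = (n:ℝ) * (lam i) ^ 2 - 2 * lam i * (∑ j, lam j) + ∑ j, (lam j) ^ 2 := by
      intro i
      have : ∀ j, (lam i - lam j) ^ 2 = (lam i)^2 - 2 * lam i * lam j + (lam j)^2 := by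
        intro j; ring
      rw [Finset.sum_congr rfl fun j _ => this j, Finset.sum_add_distrib,
        Finset.sum_sub_distrib, Finset.sum_const, Finset.card_univ, Fintype.card_fin,
        ← Finset.mul_sum]
      push_cast; ring
    rw [Finset.sum_congr rfl fun i _ => hrow i, Finset.sum_add_distrib,
      Finset.sum_sub_distrib, ← Finset.mul_sum, ← Finset.sum_mul, Finset.sum_const,
      Finset.card_univ, Fintype.card_fin]
    push_cast
    ring_nf
    rw [← Finset.sum_mul]
    ring
  rw [hV, H_zero, H, H, S_one, hc2, Nat.choose_one_right]
  have h2 : S n 2 lam = ((∑ i, lam i) ^ 2 - ∑ i, (lam i) ^ 2) / 2 := by linarith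
  rw [h2]
  field_simp
  ring

lemma newton_base_le (n : ℕ) (hn : 2 ≤ n) (lam : Fin n → ℝ) :
    H n 0 lam * H n 2 lam ≤ H n 1 lam ^ 2 := by
  have hk := newton_base_key n hn lam
  have hV : 0 ≤ ∑ i, ∑ j, (lam i - lam j) ^ 2 := by positivity
  have h2 : (2:ℝ) ≤ n := by exact_mod_cast hn
  have hfac : (0:ℝ) < 2 * (n:ℝ) ^ 2 * ((n:ℝ) - 1) := by nlinarith
  nlinarith [hfac, hk, hV]

lemma newton_base_eq (n : ℕ) (hn : 2 ≤ n) (lam : Fin n → ℝ)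
    (h : H n 0 lam * H n 2 lam = H n 1 lam ^ 2) : ∀ i j, lam i = lam j := by
  have hk := newton_base_key n hn lam
  rw [h, sub_self, mul_zero] at hk
  have hz : ∀ i ∈ (Finset.univ : Finset (Fin n)), ∑ j, (lam i - lam j) ^ 2 = 0 :=
    (Finset.sum_eq_zero_iff_of_nonneg (fun i _ => by positivity)).1 hk.symm
  intro i j
  have hzi : ∀ j ∈ (Finset.univ : Finset (Fin n)), (lam i - lam j) ^ 2 = 0 :=
    (Finset.sum_eq_zero_iff_of_nonneg (fun j _ => by positivity)).1 (hz i (Finset.mem_univ i))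
  have := hzi j (Finset.mem_univ j)
  have := pow_eq_zero_iff (n := 2) (by norm_num) |>.1 this
  linarith

lemma S_eq_coeff (n j : ℕ) (hj : j ≤ n) (lam : Fin n → ℝ) :
    (∏ i : Fin n, (X + C (lam i))).coeff (n - j) = S n j lam := by
  have hcard : (Finset.univ : Finset (Fin n)).card = n := by simp
  have h := Finset.prod_X_add_C_coeff (Finset.univ : Finset (Fin n)) lam
    (k := n - j) (by rw [hcard]; omega)
  rw [h, hcard, S, Nat.sub_sub_self hj]

lemma multiset_exists_fn {α : Type*} : ∀ (m : ℕ) (M : Multiset α), Multiset.card M = m →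
    ∃ g : Fin m → α, M = Multiset.map g Finset.univ.val := by
  intro m
  induction m with
  | zero =>
    intro M hM
    exact ⟨Fin.elim0, by simp [Multiset.card_eq_zero.1 hM]⟩
  | succ m ih =>
    intro M hM
    obtain ⟨a, ha⟩ := Multiset.exists_mem_of_ne_zero
      (s := M) (by rintro rfl; simp at hM)
    obtain ⟨M', rfl⟩ := Multiset.exists_cons_of_mem ha
    obtain ⟨g', hg'⟩ := ih M' (by simpa using hM)
    refine ⟨Fin.cons a g', ?_⟩
    rw [Fin.univ_succ, Finset.cons_val, Multiset.map_cons, Fin.cons_zero, Finset.map_val,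
      Multiset.map_map]
    rw [hg']
    simp [Function.comp_def]

lemma choose_identity (n j : ℕ) (hj : j + 1 ≤ n) :
    (n - j) * n.choose j = n * (n-1).choose j := by
  have h1 : n.choose (j+1) * (j+1) = n.choose j * (n - j) := Nat.choose_succ_right_eq n j
  have h2 : Nat.succ (n-1) * (n-1).choose j = (n-1+1).choose (j+1) * (j+1) :=
    Nat.add_one_mul_choose_eq (n-1) j
  have hn : n - 1 + 1 = n := by omega
  rw [hn] at h2
  calc (n - j) * n.choose j = n.choose j * (n - j) := Nat.mul_comm _ _
    _ = n.choose (j+1) * (j+1) := h1.symm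
    _ = Nat.succ (n-1) * (n-1).choose j := h2.symm
    _ = n * (n-1).choose j := by rw [Nat.succ_eq_add_one, hn]

lemma deriv_step (n : ℕ) (hn : 2 ≤ n) (lam : Fin n → ℝ) :
    ∃ nu : Fin (n-1) → ℝ, ∀ j, j ≤ n - 1 → H (n-1) j nu = H n j lam := by
  classical
  set p : ℝ[X] := ∏ i : Fin n, (X + C (lam i)) with hp
  have hmonic : p.Monic := monic_prod_of_monic _ _ fun i _ => monic_X_add_C (lam i)
  have hdeg : p.natDegree = n := by
    rw [hp, natDegree_prod_of_monic _ _ fun i _ => monic_X_add_C (lam i)]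
    simp [natDegree_X_add_C]
  have hsplits : p.Splits :=
    Splits.prod fun i _ => Splits.of_natDegree_le_one (le_of_eq (natDegree_X_add_C _))
  have hroots : Multiset.card p.roots = n := by
    rw [← hdeg]; exact (Polynomial.splits_iff_card_roots).1 hsplits
  have hdle : (derivative p).natDegree ≤ n - 1 := by
    simpa [hdeg] using natDegree_derivative_le p
  have hcard : Multiset.card (derivative p).roots = n - 1 := by
    have h1 := Polynomial.card_roots_le_derivative p
    have h2 := Polynomial.card_roots' (derivative p)
    omega
  have hddeg : (derivative p).natDegree = n - 1 := by
    have h2 := Polynomial.card_roots' (derivative p)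
    omega
  have hdsplits : (derivative p).Splits :=
    (Polynomial.splits_iff_card_roots).2 (by rw [hcard, hddeg])
  have hlead : (derivative p).leadingCoeff = (n : ℝ) := by
    rw [Polynomial.leadingCoeff, hddeg, Polynomial.coeff_derivative]
    have hsub : n - 1 + 1 = n := by omega
    rw [hsub, ← hdeg, hmonic.coeff_natDegree, one_mul, hdeg, Nat.cast_sub (by omega : 1 ≤ n)]
    ring
  obtain ⟨g, hg⟩ := multiset_exists_fn (n-1) (derivative p).roots hcard
  refine ⟨fun i => -(g i), fun j hj => ?_⟩
  have hfact : derivative p = C ((n:ℝ)) * ∏ i : Fin (n-1), (X + C (-(g i))) := by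
    have h := hdsplits.eq_prod_roots
    rw [hlead, hg] at h
    rw [h, Multiset.map_map]
    congr 1
    rw [Finset.prod]
    congr 1
    exact Multiset.map_congr rfl fun i _ => by simp [sub_eq_add_neg]
  -- coefficient comparison at degree n - 1 - j
  have hcoeff : S n j lam * ((n - j : ℕ) : ℝ) = (n : ℝ) * S (n-1) j (fun i => -(g i)) := by
    have h1 := Polynomial.coeff_derivative (p := p) (n := n - 1 - j)
    have hsub : n - 1 - j + 1 = n - j := by omega
    have hsub2 : ((n:ℕ) - 1 : ℕ) - j = n - 1 - j := rfl
    rw [hsub] at h1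
    have h2 : p.coeff (n - j) = S n j lam := S_eq_coeff n j (by omega) lam
    have h3 : (C ((n:ℝ)) * ∏ i : Fin (n-1), (X + C (-(g i)))).coeff (n - 1 - j)
        = (n:ℝ) * S (n-1) j (fun i => -(g i)) := by
      rw [Polynomial.coeff_C_mul, S_eq_coeff (n-1) j hj (fun i => -(g i))]
    rw [hfact] at h1
    rw [h3] at h1
    rw [h2] at h1
    have hc : ((n - 1 - j : ℕ) : ℝ) + 1 = ((n - j : ℕ) : ℝ) := by
      have h5 : (n - 1 - j) + 1 = n - j := by omega
      exact_mod_cast congrArg (Nat.cast (R := ℝ)) h5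
    rw [hc] at h1
    exact h1.symm
  -- now conclude H equality
  have hcn : (0:ℝ) < ((n.choose j : ℕ) : ℝ) := by
    exact_mod_cast Nat.choose_pos (by omega : j ≤ n)
  have hcn1 : (0:ℝ) < (((n-1).choose j : ℕ) : ℝ) := by
    exact_mod_cast Nat.choose_pos hj
  have hnpos : (0:ℝ) < (n:ℝ) := by positivity
  have hnat : ((n - j : ℕ) : ℝ) * ((n.choose j : ℕ) : ℝ)
      = (n : ℝ) * (((n-1).choose j : ℕ) : ℝ) := by
    exact_mod_cast congrArg (Nat.cast (R := ℝ)) (choose_identity n j (by omega))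
  rw [H, H, div_eq_div_iff (by positivity) (by positivity)]
  have hmain : (n:ℝ) * ((S (n-1) j fun i => -(g i)) * ((n.choose j : ℕ) : ℝ))
      = (n:ℝ) * (S n j lam * (((n-1).choose j : ℕ) : ℝ)) := by
    linear_combination (S n j lam) * hnat - ((n.choose j : ℕ) : ℝ) * hcoeff
  exact mul_left_cancel₀ (ne_of_gt hnpos) hmain

lemma H_top (n : ℕ) (lam : Fin n → ℝ) : H n n lam = ∏ i, lam i := by
  simp [H, S_top]

lemma S_inv (n j : ℕ) (hj : j ≤ n) (lam : Fin n → ℝ) (h : ∀ i, lam i ≠ 0) :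
    S n j (fun i => (lam i)⁻¹) * ∏ i, lam i = S n (n - j) lam := by
  classical
  unfold S
  rw [Finset.sum_mul]
  refine Finset.sum_nbij' (fun A => Aᶜ) (fun B => Bᶜ) ?_ ?_ ?_ ?_ ?_
  · intro A hA
    rw [Finset.mem_powersetCard] at hA ⊢
    refine ⟨Finset.subset_univ _, ?_⟩
    rw [Finset.card_compl, Fintype.card_fin, hA.2]
  · intro B hB
    rw [Finset.mem_powersetCard] at hB ⊢
    refine ⟨Finset.subset_univ _, ?_⟩
    rw [Finset.card_compl, Fintype.card_fin, hB.2]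
    omega
  · intro A _; exact compl_compl A
  · intro B _; exact compl_compl B
  · intro A _
    rw [← Finset.prod_mul_prod_compl A lam, ← mul_assoc, ← Finset.prod_mul_distrib]
    rw [Finset.prod_congr rfl (fun i _ => inv_mul_cancel₀ (h i)), Finset.prod_const_one, one_mul]

lemma H_inv (n j : ℕ) (hj : j ≤ n) (lam : Fin n → ℝ) (h : ∀ i, lam i ≠ 0) :
    H n j (fun i => (lam i)⁻¹) * ∏ i, lam i = H n (n - j) lam := by
  rw [H, H, Nat.choose_symm hj, div_mul_eq_mul_div, S_inv n j hj lam h]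

lemma newton_top_le (m : ℕ) (lam : Fin (m+2) → ℝ) :
    H (m+2) m lam * H (m+2) (m+2) lam ≤ H (m+2) (m+1) lam ^ 2 := by
  classical
  by_cases hz : ∏ i, lam i = 0
  · rw [H_top, hz, mul_zero]
    exact sq_nonneg _
  · have hne : ∀ i, lam i ≠ 0 := by
      intro i hi
      exact hz (Finset.prod_eq_zero (Finset.mem_univ i) hi)
    set inv : Fin (m+2) → ℝ := fun i => (lam i)⁻¹ with hinv
    have e1 : H (m+2) 1 inv * ∏ i, lam i = H (m+2) (m+1) lam := by
      have := H_inv (m+2) 1 (by omega) lam hne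
      rwa [show m + 2 - 1 = m + 1 by omega] at this
    have e2 : H (m+2) 2 inv * ∏ i, lam i = H (m+2) m lam := by
      have := H_inv (m+2) 2 (by omega) lam hne
      rwa [show m + 2 - 2 = m by omega] at this
    have hbase := newton_base_le (m+2) (by omega) inv
    rw [H_zero, one_mul] at hbase
    rw [H_top, ← e1, ← e2]
    have hP2 : (0:ℝ) ≤ (∏ i, lam i) ^ 2 := sq_nonneg _
    nlinarith [mul_nonneg (sub_nonneg.2 hbase) hP2]

lemma newton_top_eq (m : ℕ) (lam : Fin (m+2) → ℝ)
    (hpos : 0 < H (m+2) (m+2) lam)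
    (heq : H (m+2) m lam * H (m+2) (m+2) lam = H (m+2) (m+1) lam ^ 2) :
    ∀ i j, lam i = lam j := by
  classical
  have hprod : 0 < ∏ i, lam i := by rwa [H_top] at hpos
  have hne : ∀ i, lam i ≠ 0 := by
    intro i hi
    rw [Finset.prod_eq_zero (Finset.mem_univ i) hi] at hprod
    exact lt_irrefl _ hprod
  set inv : Fin (m+2) → ℝ := fun i => (lam i)⁻¹ with hinv
  have e1 : H (m+2) 1 inv * ∏ i, lam i = H (m+2) (m+1) lam := by
    have := H_inv (m+2) 1 (by omega) lam hne
    rwa [show m + 2 - 1 = m + 1 by omega] at this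
  have e2 : H (m+2) 2 inv * ∏ i, lam i = H (m+2) m lam := by
    have := H_inv (m+2) 2 (by omega) lam hne
    rwa [show m + 2 - 2 = m by omega] at this
  have hP : (∏ i, lam i) ≠ 0 := ne_of_gt hprod
  have heqinv : H (m+2) 0 inv * H (m+2) 2 inv = H (m+2) 1 inv ^ 2 := by
    rw [H_zero, one_mul]
    rw [H_top] at heq
    have h3 : H (m+2) 2 inv * (∏ i, lam i) ^ 2
        = H (m+2) 1 inv ^ 2 * (∏ i, lam i) ^ 2 := by
      linear_combination (∏ i, lam i) * e2 + heq - (H (m+2) 1 inv * ∏ i, lam i + H (m+2) (m+1) lam) * e1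
    exact mul_right_cancel₀ (pow_ne_zero 2 hP) h3
  have hc := newton_base_eq (m+2) (by omega) inv heqinv
  intro i j
  have := hc i j
  simp only [hinv] at this
  exact inv_injective this

lemma newton_ineq : ∀ n m : ℕ, m + 2 ≤ n → ∀ lam : Fin n → ℝ,
    H n m lam * H n (m+2) lam ≤ H n (m+1) lam ^ 2 := by
  intro n
  induction n using Nat.strong_induction_on with
  | _ n ih =>
    intro m hm lam
    rcases eq_or_lt_of_le hm with heq | hlt
    · obtain rfl : n = m + 2 := heq.symm
      exact newton_top_le m lam
    · by_cases hm0 : m = 0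
      · subst hm0
        exact newton_base_le n (by omega) lam
      · obtain ⟨nu, hnu⟩ := deriv_step n (by omega) lam
        have h1 := ih (n-1) (by omega) m (by omega) nu
        rwa [hnu m (by omega), hnu (m+1) (by omega), hnu (m+2) (by omega)] at h1

lemma newton_eq : ∀ n m : ℕ, m + 2 ≤ n → ∀ lam : Fin n → ℝ,
    (∀ i, 1 ≤ i → i ≤ m + 2 → 0 < H n i lam) →
    H n m lam * H n (m+2) lam = H n (m+1) lam ^ 2 →
    ∀ i j, lam i = lam j := by
  intro n
  induction n using Nat.strong_induction_on with
  | _ n ih =>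
    intro m hm lam hpos heq
    rcases eq_or_lt_of_le hm with heqn | hlt
    · obtain rfl : n = m + 2 := heqn.symm
      exact newton_top_eq m lam (hpos (m+2) (by omega) (by omega)) heq
    · by_cases hm0 : m = 0
      · subst hm0
        exact newton_base_eq n (by omega) lam heq
      · obtain ⟨nu, hnu⟩ := deriv_step n (by omega) lam
        have hconst : ∀ i j, nu i = nu j := by
          refine ih (n-1) (by omega) m (by omega) nu ?_ ?_
          · intro i hi1 hi2
            rw [hnu i (by omega)]
            exact hpos i hi1 hi2
          · rw [hnu m (by omega), hnu (m+1) (by omega), hnu (m+2) (by omega)]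
            exact heq
        have hn1 : 0 < n - 1 := by omega
        set a : ℝ := nu ⟨0, hn1⟩ with ha
        have hnuconst : nu = fun _ => a := funext fun i => hconst i ⟨0, hn1⟩
        have h1 : H n 1 lam = a := by
          rw [← hnu 1 (by omega), hnuconst, H_const (n-1) 1 a (by omega), pow_one]
        have h2 : H n 2 lam = a ^ 2 := by
          rw [← hnu 2 (by omega), hnuconst, H_const (n-1) 2 a (by omega)]
        refine newton_base_eq n (by omega) lam ?_
        rw [H_zero, one_mul, h1, h2]

/-- Equality case of the Newton–Maclaurin inequality: if `n ≥ 2`, `1 ≤ l < k ≤ n` and `λ`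
lies in the Gårding cone `Γ_k⁺` (i.e. `H_i(λ) > 0` for `i = 1, …, k`), then
`H_{l-1}(λ) · H_k(λ) = H_l(λ) · H_{k-1}(λ)` if and only if there is a constant `c > 0`
with `λ_i = c` for all `i`. -/
theorem newton_maclaurin_equality (n l k : ℕ) (hn : 2 ≤ n) (hl : 1 ≤ l) (hlk : l < k)
    (hkn : k ≤ n) (lam : Fin n → ℝ)
    (hGarding : ∀ i, 1 ≤ i → i ≤ k → 0 < H n i lam) :
    H n (l - 1) lam * H n k lam = H n l lam * H n (k - 1) lam ↔
      ∃ c : ℝ, 0 < c ∧ ∀ i, lam i = c := by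
  obtain ⟨l', rfl⟩ : ∃ l', l = l' + 1 := ⟨l - 1, by omega⟩
  obtain ⟨k', rfl⟩ : ∃ k', k = k' + 1 := ⟨k - 1, by omega⟩
  simp only [Nat.add_sub_cancel]
  constructor
  · intro heq
    have hp : ∀ i, i ≤ k' + 1 → 0 < H n i lam := by
      intro i hi
      rcases Nat.eq_zero_or_pos i with rfl | hi1
      · rw [H_zero]; norm_num
      · exact hGarding i hi1 hi
    set r : ℕ → ℝ := fun m => H n (m+1) lam / H n m lam with hr
    have hstep : ∀ m, m + 2 ≤ k' + 1 → r (m+1) ≤ r m := by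
      intro m hm
      have hN := newton_ineq n m (by omega) lam
      simp only [hr]
      rw [div_le_div_iff₀ (hp (m+1) (by omega)) (hp m (by omega))]
      nlinarith [hN]
    have hchain : ∀ a d, a + d + 1 ≤ k' + 1 → r (a + d) ≤ r a := by
      intro a d
      induction d with
      | zero => intro _; exact le_refl _
      | succ d ihd =>
        intro hbound
        have h1 : r (a + d + 1) ≤ r (a + d) := hstep (a + d) (by omega)
        have h2 : r (a + d) ≤ r a := ihd (by omega)
        calc r (a + (d+1)) = r (a + d + 1) := by ring_nf
          _ ≤ r (a + d) := h1
          _ ≤ r a := h2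
    have hrkl : r k' = r l' := by
      simp only [hr]
      rw [div_eq_div_iff (ne_of_gt (hp k' (by omega))) (ne_of_gt (hp l' (by omega)))]
      linear_combination heq
    have h1 : r (l' + 1) ≤ r l' := hstep l' (by omega)
    have h2 : r k' ≤ r (l' + 1) := by
      obtain ⟨d, rfl⟩ : ∃ d, k' = l' + 1 + d := ⟨k' - (l' + 1), by omega⟩
      exact hchain (l' + 1) d (by omega)
    have hreq : r (l' + 1) = r l' := le_antisymm h1 (hrkl ▸ h2)
    have heqN : H n l' lam * H n (l' + 2) lam = H n (l' + 1) lam ^ 2 := by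
      have := hreq
      simp only [hr] at this
      rw [div_eq_div_iff (ne_of_gt (hp (l'+1) (by omega))) (ne_of_gt (hp l' (by omega)))] at this
      have h3 : l' + 1 + 1 = l' + 2 := by omega
      rw [h3] at this
      linear_combination this
    have hconst := newton_eq n l' (by omega) lam
      (fun i hi1 hi2 => hGarding i hi1 (by omega)) heqN
    have h0n : 0 < n := by omega
    refine ⟨lam ⟨0, h0n⟩, ?_, fun i => hconst i ⟨0, h0n⟩⟩
    have hfun : lam = fun _ => lam ⟨0, h0n⟩ := funext fun i => hconst i ⟨0, h0n⟩
    have hH1 : H n 1 lam = lam ⟨0, h0n⟩ := by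
      rw [hfun, H_const n 1 _ (by omega), pow_one]
    have := hGarding 1 (le_refl 1) (by omega)
    rwa [hH1] at this
  · rintro ⟨c, hc, hlam⟩
    have hfun : lam = fun _ => c := funext hlam
    rw [hfun, H_const n l' c (by omega), H_const n (k'+1) c (by omega),
      H_const n (l'+1) c (by omega), H_const n k' c (by omega), ← pow_add, ← pow_add]
    congr 1
    omega
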